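/- For all natural numbers m and n with m ≥ n and 2m ≥ n+1, one has (1/(2·4^m·m!))·Σ_{k=0}^{m} C(m,k)·(4k+1)·(2k)ⁿ·(−1)^k / (k+1/2)_{m+1} = (2ⁿ·(2m−n−1)!)/((m!)²·(4m+1)!!)·[4·p_{n+1}(m) + (2m−n)·p_n(m)]. -/

import Mathlib

open Polynomial Finset

/-- The Pochhammer symbol (rising factorial) `(α)_k`. -/
noncomputable def poch (α : ℝ) (k : ℕ) : ℝ := ∏ i ∈ Finset.range k, (α + i)

/-- The Stirling numbers of the second kind. -/
noncomputable def stirling2 (n k : ℕ) : ℝ :=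
  (1 / (Nat.factorial k) : ℝ) *
    ∑ j ∈ Finset.range (k + 1), (k.choose j : ℝ) * (-1) ^ (k - j) * (j : ℝ) ^ n

/-- The polynomial `p_n(m)`. -/
noncomputable def pPoly (n : ℕ) (m : ℝ) : ℝ :=
  ∑ k ∈ Finset.range (n + 1),
    stirling2 n k * poch (-m) k * poch (1 / 2) k * poch (2 * m - n + 1) (n - k)

/-- The odd double factorial `(2j+1)!! = 1·3·5⋯(2j+1)`. -/
noncomputable def oddDF (j : ℕ) : ℝ := ∏ i ∈ Finset.range (j + 1), (2 * (i : ℝ) + 1)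



lemma poch_succ (a : ℝ) (k : ℕ) : poch a (k+1) = poch a k * (a + k) :=
  Finset.prod_range_succ _ _

lemma poch_succ' (a : ℝ) (k : ℕ) : poch a (k+1) = a * poch (a+1) k := by
  rw [poch, Finset.prod_range_succ']
  simp only [Nat.cast_zero, add_zero, mul_comm]
  congr 1
  refine Finset.prod_congr rfl fun i _ => ?_
  push_cast; ring

lemma poch_add (a : ℝ) (j r : ℕ) : poch a (j+r) = poch a j * poch (a + j) r := by
  induction r with
  | zero => simp [poch]
  | succ r ih =>
      rw [← Nat.add_assoc, poch_succ, ih, poch_succ, mul_assoc]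
      congr 2
      push_cast; ring

lemma poch_pos {a : ℝ} (ha : 0 < a) (k : ℕ) : 0 < poch a k := by
  refine Finset.prod_pos fun i _ => ?_
  positivity

lemma poch_nat_fac (a b : ℕ) :
    (Nat.factorial a : ℝ) * poch ((a : ℝ)+1) b = (Nat.factorial (a+b) : ℝ) := by
  induction b with
  | zero => simp [poch]
  | succ b ih =>
      rw [poch_succ, ← mul_assoc, ih, ← Nat.add_assoc, Nat.factorial_succ]
      push_cast; ring

lemma poch_neg_nat {m j : ℕ} (h : j ≤ m) :
    (Nat.factorial (m-j) : ℝ) * poch (-(m:ℝ)) j = (-1)^j * Nat.factorial m := by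
  induction j with
  | zero => simp [poch]
  | succ j ih =>
      have hj : j ≤ m := Nat.le_of_succ_le h
      have h1 : m - j = (m - (j+1)) + 1 := by omega
      have ih' := ih hj
      rw [h1, Nat.factorial_succ] at ih'
      rw [poch_succ]
      have hc : ((m - (j+1) : ℕ) : ℝ) + 1 = (m:ℝ) - j := by
        have := Nat.cast_sub h (R := ℝ)
        push_cast [this]; ring
      rw [Nat.cast_mul] at ih'
      rw [show ((m-(j+1)+1 : ℕ):ℝ) = ((m-(j+1):ℕ):ℝ)+1 by push_cast; ring, hc] at ih'
      have : (-(m:ℝ) + j) = -((m:ℝ) - j) := by ring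
      rw [this]
      calc ((m-(j+1)).factorial : ℝ) * (poch (-(m:ℝ)) j * -((m:ℝ) - j))
          = (((m:ℝ) - j) * (m-(j+1)).factorial) * poch (-(m:ℝ)) j * (-1) := by ring
        _ = (-1)^j * m.factorial * (-1) := by rw [ih']
        _ = (-1)^(j+1) * m.factorial := by ring

noncomputable def ODF (r : ℕ) : ℝ := ∏ i ∈ Finset.range r, (2*(i:ℝ)+1)

lemma ODF_pos (r : ℕ) : 0 < ODF r := by
  refine Finset.prod_pos fun i _ => by positivity

lemma two_pow_poch_half (r : ℕ) : 2^r * poch (1/2) r = ODF r := by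
  induction r with
  | zero => simp [poch, ODF]
  | succ r ih =>
      rw [poch_succ, ODF, Finset.prod_range_succ, ← ODF, ← ih, pow_succ]
      ring


lemma fac_stirling2 (n k : ℕ) :
    (Nat.factorial k : ℝ) * stirling2 n k
      = ∑ j ∈ Finset.range (k + 1), (k.choose j : ℝ) * (-1) ^ (k - j) * (j : ℝ) ^ n := by
  rw [stirling2, ← mul_assoc, mul_one_div, div_self (by positivity : (Nat.factorial k:ℝ) ≠ 0), one_mul]

lemma stirling2_zero_right (n : ℕ) : stirling2 (n+1) 0 = 0 := by
  simp [stirling2]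

lemma stirling2_rec (n j : ℕ) :
    stirling2 (n+1) (j+1) = (j+1) * stirling2 n (j+1) + stirling2 n j := by
  have hfac : (Nat.factorial (j+1) : ℝ) ≠ 0 := by positivity
  have key : (Nat.factorial (j+1) : ℝ) * stirling2 (n+1) (j+1)
      = (Nat.factorial (j+1) : ℝ) * ((j+1) * stirling2 n (j+1) + stirling2 n j) := by
    rw [fac_stirling2]
    have e1 : ∀ i ∈ Finset.range (j+2),
        ((j+1).choose i : ℝ) * (-1) ^ (j+1-i) * (i : ℝ) ^ (n+1)
        = (j+1) * (((j+1).choose i : ℝ) * (-1) ^ (j+1-i) * (i : ℝ) ^ n)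
          - ((j+1:ℝ) - i) * ((j+1).choose i : ℝ) * (-1) ^ (j+1-i) * (i : ℝ) ^ n := by
      intro i hi
      rw [pow_succ]
      ring
    rw [Finset.sum_congr rfl e1, Finset.sum_sub_distrib, ← Finset.mul_sum, ← fac_stirling2]
    -- second sum: ((j+1)-i) * C(j+1,i) = (j+1) * C(j,i)
    have e2 : ∀ i ∈ Finset.range (j+2),
        ((j+1:ℝ) - i) * ((j+1).choose i : ℝ) * (-1) ^ (j+1-i) * (i : ℝ) ^ n
        = (j+1) * ((j.choose i : ℝ) * (-1) ^ (j+1-i) * (i : ℝ) ^ n) := by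
      intro i hi
      simp only [Finset.mem_range] at hi
      have h2 : i ≤ j+1 := by omega
      have hnn : ((j+1:ℝ) - i) = ((j+1-i : ℕ) : ℝ) := by
        rw [Nat.cast_sub h2]; push_cast; ring
      have hnat : (j+1-i) * (j+1).choose i = (j+1) * j.choose i := by
        rw [Nat.mul_comm (j+1-i), ← Nat.choose_mul_succ_eq, Nat.mul_comm]
      have hcast : ((j+1-i:ℕ):ℝ) * (((j+1).choose i:ℕ):ℝ) = ((j:ℝ)+1) * ((j.choose i:ℕ):ℝ) := by
        exact_mod_cast congrArg (Nat.cast : ℕ → ℝ) hnat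
      rw [hnn]
      linear_combination ((-1:ℝ)^(j+1-i) * (i:ℝ)^n) * hcast
    rw [Finset.sum_congr rfl e2, ← Finset.mul_sum]
    -- drop last term of the second sum (C(j, j+1) = 0)
    rw [Finset.sum_range_succ]
    simp only [Nat.choose_succ_self, Nat.cast_zero, zero_mul, mul_zero, add_zero]
    have e3 : ∀ i ∈ Finset.range (j+1),
        (j.choose i : ℝ) * (-1) ^ (j+1-i) * (i : ℝ) ^ n
        = -((j.choose i : ℝ) * (-1) ^ (j-i) * (i : ℝ) ^ n) := by
      intro i hi
      simp only [Finset.mem_range] at hi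
      have : j+1-i = (j-i)+1 := by omega
      rw [this, pow_succ]
      ring
    rw [Finset.sum_congr rfl e3, Finset.sum_neg_distrib, ← fac_stirling2]
    rw [Nat.factorial_succ]
    push_cast
    ring
  exact mul_left_cancel₀ hfac key

lemma stirling2_eq_zero_of_lt : ∀ n j : ℕ, n < j → stirling2 n j = 0 := by
  intro n
  induction n with
  | zero =>
      intro j hj
      rw [stirling2]
      have e : ∀ i ∈ Finset.range (j+1),
          (j.choose i : ℝ) * (-1) ^ (j-i) * (i : ℝ) ^ 0
          = (-1)^j * ((-1) ^ i * (j.choose i : ℝ)) := by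
        intro i hi
        simp only [Finset.mem_range] at hi
        have h1 : j - i + i = j := by omega
        have : (-1:ℝ)^(j-i) * (-1)^i = (-1)^j := by rw [← pow_add, h1]
        have hsq : ((-1:ℝ)^i)*((-1:ℝ)^i) = 1 := by
          rw [← mul_pow]; norm_num
        rw [pow_zero]
        linear_combination ((j.choose i:ℝ)) * (-1:ℝ)^i * this - ((j.choose i:ℝ)) * (-1:ℝ)^(j-i) * hsq
      rw [Finset.sum_congr rfl e, ← Finset.mul_sum]
      have hz : ∑ i ∈ Finset.range (j+1), ((-1:ℝ) ^ i * (j.choose i : ℝ)) = 0 := by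
        have hint := Int.alternating_sum_range_choose_of_ne (n := j) (by omega)
        have := congrArg (Int.cast : ℤ → ℝ) hint
        push_cast at this
        convert this using 2
      rw [hz]
      ring
  | succ n ih =>
      intro j hj
      obtain ⟨j', rfl⟩ : ∃ j', j = j'+1 := ⟨j-1, by omega⟩
      rw [stirling2_rec]
      rw [ih _ (by omega), ih _ (by omega)]
      ring

lemma pow_eq_sum_stirling (n k : ℕ) :
    (k:ℝ)^n = ∑ j ∈ Finset.range (n+1),
      stirling2 n j * (Nat.factorial j) * (k.choose j : ℝ) := by
  induction n with
  | zero => norm_num [stirling2]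
  | succ n ih =>
      have hkc : ∀ j : ℕ, (k:ℝ) * (k.choose j : ℝ)
          = ((j:ℝ)+1) * (k.choose (j+1) : ℝ) + j * (k.choose j : ℝ) := by
        intro j
        rcases le_or_gt j k with h | h
        · have h1 : k.choose (j+1) * (j+1) = k.choose j * (k - j) := Nat.choose_succ_right_eq k j
          have h2 : ((k.choose (j+1) : ℝ)) * ((j:ℝ)+1) = (k.choose j : ℝ) * ((k:ℝ) - j) := by
            have := congrArg (Nat.cast : ℕ → ℝ) h1
            push_cast [Nat.cast_sub h] at this
            linarith [this]
          linarith [h2]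
        · rw [Nat.choose_eq_zero_of_lt h, Nat.choose_eq_zero_of_lt (by omega)]
          ring
      have step1 : (k:ℝ)^(n+1)
          = ∑ j ∈ Finset.range (n+1),
              (stirling2 n j * (Nat.factorial j) * (((j:ℝ)+1) * (k.choose (j+1) : ℝ))
               + stirling2 n j * (Nat.factorial j) * ((j:ℝ) * (k.choose j : ℝ))) := by
        rw [pow_succ, ih, Finset.sum_mul]
        refine Finset.sum_congr rfl fun j _ => ?_
        rw [mul_comm _ (k:ℝ), show (k:ℝ) * (stirling2 n j * (Nat.factorial j) * (k.choose j : ℝ))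
          = stirling2 n j * (Nat.factorial j) * ((k:ℝ) * (k.choose j : ℝ)) by ring, hkc j]
        ring
      rw [step1, Finset.sum_add_distrib]
      -- target sum, strip the j = 0 term
      rw [Finset.sum_range_succ' (fun j => stirling2 (n+1) j * (Nat.factorial j) * (k.choose j : ℝ)) (n+1)]
      simp only [stirling2_zero_right, zero_mul, mul_zero, zero_mul, add_zero]
      have expand : ∀ j ∈ Finset.range (n+1),
          stirling2 (n+1) (j+1) * (Nat.factorial (j+1)) * (k.choose (j+1) : ℝ)
          = ((j:ℝ)+1) * stirling2 n (j+1) * (Nat.factorial (j+1)) * (k.choose (j+1) : ℝ)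
            + stirling2 n j * (Nat.factorial j) * (((j:ℝ)+1) * (k.choose (j+1) : ℝ)) := by
        intro j _
        rw [stirling2_rec, Nat.factorial_succ]
        push_cast
        ring
      rw [Finset.sum_congr rfl expand, Finset.sum_add_distrib]
      have shift : ∑ j ∈ Finset.range (n+1),
          ((j:ℝ)+1) * stirling2 n (j+1) * (Nat.factorial (j+1)) * (k.choose (j+1) : ℝ)
          = ∑ j ∈ Finset.range (n+1),
              stirling2 n j * (Nat.factorial j) * ((j:ℝ) * (k.choose j : ℝ)) := by
        have h1 := Finset.sum_range_succ' (fun j => (j:ℝ) * stirling2 n j * (Nat.factorial j) * (k.choose j : ℝ)) (n+1)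
        have h2 := Finset.sum_range_succ (fun j => (j:ℝ) * stirling2 n j * (Nat.factorial j) * (k.choose j : ℝ)) (n+1)
        simp only [Nat.cast_zero, zero_mul, add_zero,
          stirling2_eq_zero_of_lt n (n+1) (by omega), mul_zero, zero_mul] at h1 h2
        calc ∑ j ∈ Finset.range (n+1),
              ((j:ℝ)+1) * stirling2 n (j+1) * (Nat.factorial (j+1)) * (k.choose (j+1) : ℝ)
            = ∑ j ∈ Finset.range (n+1),
              (((j+1:ℕ):ℝ)) * stirling2 n (j+1) * (Nat.factorial (j+1)) * (k.choose (j+1) : ℝ) := by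
              refine Finset.sum_congr rfl fun j _ => ?_
              push_cast; ring
          _ = ∑ j ∈ Finset.range (n+2),
              (j:ℝ) * stirling2 n j * (Nat.factorial j) * (k.choose j : ℝ) := by rw [h1]
          _ = ∑ j ∈ Finset.range (n+1),
              (j:ℝ) * stirling2 n j * (Nat.factorial j) * (k.choose j : ℝ) := by rw [h2]
          _ = _ := by
              refine Finset.sum_congr rfl fun j _ => ?_
              ring
      rw [shift]
      ring

lemma Gsum (L : ℕ) : ∀ (M : ℕ) (a c : ℝ), 0 < a →
    ∑ i ∈ Finset.range (M+1),
        (M.choose i : ℝ) * (-1)^i * (4*(i:ℝ) + c) / poch (a + (i:ℝ)) (L+1)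
    = c * (Nat.factorial (L+M) : ℝ) / ((Nat.factorial L : ℝ) * poch a (L+M+1))
      - 4*(M:ℝ)*(Nat.factorial (L+M-1) : ℝ)/((Nat.factorial L : ℝ) * poch (a+1) (L+M)) := by
  intro M
  induction M with
  | zero =>
      intro a c ha
      have hp : poch a (L+1) ≠ 0 := ne_of_gt (poch_pos ha _)
      have hf : (Nat.factorial L : ℝ) ≠ 0 := by positivity
      rw [Finset.sum_range_one]
      norm_num
      rw [Nat.add_zero]
      field_simp
  | succ M ih =>
      intro a c ha
      have ha1 : (0:ℝ) < a + 1 := by linarith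
      set f : ℕ → ℝ := fun i =>
        (((M+1).choose i : ℕ) : ℝ) * (-1)^i * (4*(i:ℝ) + c) / poch (a + (i:ℝ)) (L+1) with hf
      set g : ℕ → ℝ := fun i =>
        ((M.choose i : ℕ) : ℝ) * (-1)^i * (4*(i:ℝ) + c) / poch (a + (i:ℝ)) (L+1) with hg
      set g2 : ℕ → ℝ := fun i =>
        ((M.choose i : ℕ) : ℝ) * (-1)^i * (4*(i:ℝ) + (c+4)) / poch ((a+1) + (i:ℝ)) (L+1) with hg2
      have hsplit : ∀ i ∈ Finset.range (M+1), f (i+1) = g (i+1) - g2 i := by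
        intro i _
        have harg : (a+1) + (i:ℝ) = a + ((i+1:ℕ):ℝ) := by push_cast; ring
        simp only [hf, hg, hg2, Nat.choose_succ_succ', Nat.cast_add, harg]
        push_cast
        rw [pow_succ]
        ring
      have hsum : ∑ i ∈ Finset.range (M+2), f i
          = (∑ i ∈ Finset.range (M+1), g i) - ∑ i ∈ Finset.range (M+1), g2 i := by
        rw [Finset.sum_range_succ' f (M+1), Finset.sum_congr rfl hsplit,
          Finset.sum_sub_distrib]
        have h1 : ∑ i ∈ Finset.range (M+1), g (i+1)
            = (∑ i ∈ Finset.range (M+1), g i) - g 0 := by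
          have h2 := Finset.sum_range_succ' g (M+1)
          have h3 := Finset.sum_range_succ g (M+1)
          have h4 : g (M+1) = 0 := by
            simp only [hg, Nat.choose_succ_self, Nat.cast_zero, zero_mul, zero_div]
          rw [h4, add_zero] at h3
          rw [h3] at h2
          linarith [h2]
        have h5 : f 0 = g 0 := by
          simp only [hf, hg, Nat.choose_zero_right]
        rw [h1, h5]
        ring
      rw [hsum, ih a c ha, ih (a+1) (c+4) ha1]
      -- now pure algebra
      have hfL : (Nat.factorial L : ℝ) ≠ 0 := by positivity
      have hBpos : (0:ℝ) < a + 2 := by linarith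
      rcases M with _ | M'
      · simp only [Nat.add_zero, Nat.cast_zero, mul_zero, zero_mul, zero_div, sub_zero,
          Nat.add_sub_cancel]
        have hP : (0:ℝ) < poch (a+1) L := poch_pos ha1 L
        have hA : poch a (L+1) = a * poch (a+1) L := poch_succ' a L
        have hB : poch (a+1) (L+1) = poch (a+1) L * (a+1+(L:ℝ)) := poch_succ _ _
        have hC : poch a (L+1+1) = a * (poch (a+1) L * (a+1+(L:ℝ))) := by
          rw [poch_succ' a (L+1), poch_succ (a+1) L]
        have hfac : ((Nat.factorial (L+1) : ℕ):ℝ) = ((L:ℝ)+1) * (Nat.factorial L : ℝ) := by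
          rw [Nat.factorial_succ]; push_cast; ring
        have hLpos : (0:ℝ) < a+1+(L:ℝ) := by positivity
        rw [hA, hB, hC, hfac]
        field_simp
        ring
      · simp only [← Nat.add_assoc, Nat.add_sub_cancel]
        have h2 : a+1+1 = a+2 := by ring
        rw [h2]
        set B := poch (a+2) (L+M') with hBdef
        have hBp : (0:ℝ) < B := poch_pos hBpos _
        have hTpos : (0:ℝ) < a+2+((L+M' : ℕ):ℝ) := by positivity
        have q1 : poch (a+1) (L+M'+1) = (a+1) * B := by
          have := poch_succ' (a+1) (L+M')
          rwa [h2] at this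
        have q2 : poch a (L+M'+1+1) = a * ((a+1) * B) := by
          rw [poch_succ' a (L+M'+1), q1]
        have q3 : poch (a+1) (L+M'+1+1) = (a+1) * (B * (a+2+((L+M' : ℕ):ℝ))) := by
          rw [poch_succ' (a+1) (L+M'+1), h2, poch_succ (a+2) (L+M')]
        have q4 : poch a (L+M'+1+1+1) = a * ((a+1) * (B * (a+2+((L+M' : ℕ):ℝ)))) := by
          rw [poch_succ' a (L+M'+1+1), q3]
        have q5 : poch (a+2) (L+M'+1) = B * (a+2+((L+M' : ℕ):ℝ)) := poch_succ (a+2) (L+M')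
        have F1 : ((Nat.factorial (L+M'+1) : ℕ):ℝ)
            = (((L+M' : ℕ):ℝ)+1) * (Nat.factorial (L+M') : ℝ) := by
          rw [Nat.factorial_succ]; push_cast; ring
        have F2 : ((Nat.factorial (L+M'+1+1) : ℕ):ℝ)
            = (((L+M' : ℕ):ℝ)+2) * ((((L+M' : ℕ):ℝ)+1) * (Nat.factorial (L+M') : ℝ)) := by
          push_cast [Nat.factorial_succ]; ring
        rw [q1, q2, q3, q4, q5, F1, F2]
        have hfM : (Nat.factorial (L+M') : ℝ) ≠ 0 := by positivity
        push_cast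
        field_simp
        ring

lemma Usum (m j : ℕ) (hj : j ≤ m) :
    ∑ k ∈ Finset.range (m+1),
      (m.choose k : ℝ) * (k.choose j : ℝ) * (4*(k:ℝ)+1) * (-1)^k / poch ((k:ℝ) + 1/2) (m+1)
    = (m.choose j : ℝ) * (-1)^j *
        ((4*(j:ℝ)+1) * (Nat.factorial (2*m-j) : ℝ)
            / ((Nat.factorial m : ℝ) * poch ((j:ℝ)+1/2) (2*m-j+1))
         - 4*((m:ℝ)-(j:ℝ)) * (Nat.factorial (2*m-j-1) : ℝ)
            / ((Nat.factorial m : ℝ) * poch ((j:ℝ)+3/2) (2*m-j))) := by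
  set F : ℕ → ℝ := fun k =>
    (m.choose k : ℝ) * (k.choose j : ℝ) * (4*(k:ℝ)+1) * (-1)^k / poch ((k:ℝ) + 1/2) (m+1)
    with hF
  have hzero : ∀ k ∈ Finset.range j, F k = 0 := by
    intro k hk
    simp only [Finset.mem_range] at hk
    simp only [hF, Nat.choose_eq_zero_of_lt hk, Nat.cast_zero, mul_zero, zero_mul, zero_div]
  have hsplit : ∑ k ∈ Finset.range (m+1), F k = ∑ i ∈ Finset.range (m+1-j), F (j+i) := by
    rw [Finset.range_eq_Ico, ← Finset.sum_Ico_consecutive _ (Nat.zero_le j) (by omega : j ≤ m+1)]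
    rw [← Finset.range_eq_Ico, Finset.sum_eq_zero hzero, zero_add]
    rw [Finset.sum_Ico_eq_sum_range]
  rw [hsplit]
  have hterm : ∀ i ∈ Finset.range (m+1-j), F (j+i)
      = ((m.choose j : ℝ) * (-1)^j) *
        (((m-j).choose i : ℝ) * (-1)^i * (4*(i:ℝ) + (4*(j:ℝ)+1))
          / poch (((j:ℝ)+1/2) + (i:ℝ)) (m+1)) := by
    intro i hi
    simp only [Finset.mem_range] at hi
    have hkm : j + i ≤ m := by omega
    have hchoose : m.choose (j+i) * (j+i).choose j = m.choose j * (m-j).choose i := by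
      have := Nat.choose_mul (n := m) (k := j+i) (s := j) (Nat.le_add_right j i)
      simpa using this
    have hcast : ((m.choose (j+i) : ℕ):ℝ) * (((j+i).choose j : ℕ):ℝ)
        = ((m.choose j : ℕ):ℝ) * (((m-j).choose i : ℕ):ℝ) := by exact_mod_cast hchoose
    simp only [hF]
    have harg : ((j+i : ℕ):ℝ) + 1/2 = ((j:ℝ)+1/2) + (i:ℝ) := by push_cast; ring
    have hP : poch ((j:ℝ)+1/2+(i:ℝ)) (m+1) ≠ 0 := ne_of_gt (poch_pos (by positivity) _)
    rw [harg, pow_add]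
    set P := poch ((j:ℝ)+1/2+(i:ℝ)) (m+1) with hPdef
    push_cast at hcast ⊢
    rw [div_eq_iff hP, mul_assoc (((m.choose j:ℕ):ℝ) * (-1) ^ j), div_mul_cancel₀ _ hP]
    linear_combination
      ((-1:ℝ)^j * (-1)^i * (4*(j:ℝ)+4*(i:ℝ)+1)) * hcast
  rw [Finset.sum_congr rfl hterm, ← Finset.mul_sum]
  have hrange : m+1-j = (m-j)+1 := by omega
  rw [hrange]
  have hG := Gsum m (m-j) ((j:ℝ)+1/2) (4*(j:ℝ)+1) (by positivity)
  rw [hG]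
  have e1 : m + (m-j) = 2*m-j := by omega
  have e2 : m + (m-j) + 1 = 2*m-j+1 := by omega
  have e3 : m + (m-j) - 1 = 2*m-j-1 := by omega
  have e4 : ((m-j : ℕ):ℝ) = (m:ℝ) - (j:ℝ) := by
    rw [Nat.cast_sub hj]
  have e5 : (j:ℝ)+1/2+1 = (j:ℝ)+3/2 := by ring
  rw [e2, e3, e4, e5, e1]

noncomputable def wgt (m j : ℕ) : ℝ :=
  poch (-(m:ℝ)) j * poch (1/2) j * (Nat.factorial (2*m-j) : ℝ)

lemma perj (m j : ℕ) (hj : j ≤ m) (hj2 : j+1 ≤ 2*m) :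
    (1/(2*4^m*(Nat.factorial m : ℝ))) * ((Nat.factorial j : ℝ) *
      ((m.choose j : ℝ) * (-1)^j *
        ((4*(j:ℝ)+1) * (Nat.factorial (2*m-j) : ℝ)
            / ((Nat.factorial m : ℝ) * poch ((j:ℝ)+1/2) (2*m-j+1))
         - 4*((m:ℝ)-(j:ℝ)) * (Nat.factorial (2*m-j-1) : ℝ)
            / ((Nat.factorial m : ℝ) * poch ((j:ℝ)+3/2) (2*m-j)))))
    = (1/((Nat.factorial m : ℝ)^2 * ODF (2*m+1))) *
        ((4*(j:ℝ)+1) * wgt m j + 4 * wgt m (j+1)) := by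
  have hQpos : (0:ℝ) < poch (1/2) j := poch_pos (by norm_num) j
  have hQ1pos : (0:ℝ) < poch (1/2) (j+1) := poch_pos (by norm_num) (j+1)
  have hRpos : (0:ℝ) < poch (1/2) (2*m+1) := poch_pos (by norm_num) _
  have hP1pos : (0:ℝ) < poch ((j:ℝ)+1/2) (2*m-j+1) := poch_pos (by positivity) _
  have hP2pos : (0:ℝ) < poch ((j:ℝ)+3/2) (2*m-j) := poch_pos (by positivity) _
  set Q := poch (1/2) j with hQ
  set R := poch (1/2) (2*m+1) with hR
  -- P1 = R / Q etc.
  have f2 : Q * poch ((j:ℝ)+1/2) (2*m-j+1) = R := by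
    have := poch_add (1/2) j (2*m-j+1)
    rw [show j + (2*m-j+1) = 2*m+1 by omega] at this
    rw [show (1/2 + (j:ℝ)) = (j:ℝ)+1/2 by ring] at this
    rw [hQ, hR, this]
  have hQ1 : poch (1/2) (j+1) = Q * (1/2 + (j:ℝ)) := poch_succ _ _
  have f3 : (Q * (1/2 + (j:ℝ))) * poch ((j:ℝ)+3/2) (2*m-j) = R := by
    have := poch_add (1/2) (j+1) (2*m-j)
    rw [show (j+1) + (2*m-j) = 2*m+1 by omega] at this
    rw [show (1/2 + ((j+1:ℕ):ℝ)) = (j:ℝ)+3/2 by push_cast; ring] at this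
    rw [hR, this, hQ1]
  have f4 : (2:ℝ)^(2*m+1) * R = ODF (2*m+1) := two_pow_poch_half _
  have fneg : ((Nat.factorial (m-j) : ℕ):ℝ) * poch (-(m:ℝ)) j
      = (-1)^j * (Nat.factorial m : ℝ) := poch_neg_nat hj
  have fnegs : poch (-(m:ℝ)) (j+1) = poch (-(m:ℝ)) j * (-(m:ℝ) + (j:ℝ)) := poch_succ _ _
  have hCH : ((m.choose j : ℕ):ℝ) * (Nat.factorial j : ℝ) * (Nat.factorial (m-j) : ℝ)
      = (Nat.factorial m : ℝ) := by
    exact_mod_cast congrArg (Nat.cast : ℕ → ℝ) (Nat.choose_mul_factorial_mul_factorial hj)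
  have hfacsplit : ((Nat.factorial (2*m-j) : ℕ):ℝ)
      = (2*(m:ℝ) - (j:ℝ)) * (Nat.factorial (2*m-j-1) : ℝ) := by
    have hc : ((2*m-j-1:ℕ):ℝ) = 2*(m:ℝ)-(j:ℝ)-1 := by
      rw [show 2*m-j-1 = 2*m-(j+1) by omega, Nat.cast_sub hj2]
      push_cast; ring
    rw [show 2*m-j = (2*m-j-1)+1 by omega, Nat.factorial_succ]
    push_cast [hc]
    ring
  have hfac2 : wgt m (j+1) = poch (-(m:ℝ)) j * (-(m:ℝ) + (j:ℝ)) * (Q * (1/2 + (j:ℝ)))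
      * (Nat.factorial (2*m-(j+1)) : ℝ) := by
    rw [wgt, fnegs, hQ1]
  have h2mj1 : (2*m-(j+1)) = 2*m-j-1 := by omega
  rw [hfac2, h2mj1, wgt]
  -- replace P1, P2 by R/Q forms
  have hQne : Q ≠ 0 := ne_of_gt hQpos
  have hQ2ne : (1/2 + (j:ℝ)) ≠ 0 := by positivity
  have hP1 : poch ((j:ℝ)+1/2) (2*m-j+1) = R / Q := by
    rw [eq_div_iff hQne]
    linear_combination f2
  have hP2 : poch ((j:ℝ)+3/2) (2*m-j) = R / (Q * (1/2 + (j:ℝ))) := by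
    rw [eq_div_iff (by positivity)]
    linear_combination f3
  rw [hP1, hP2, ← f4]
  -- express poch (-(m:ℝ)) j
  have hmjne : ((Nat.factorial (m-j) : ℕ):ℝ) ≠ 0 := by positivity
  have hpm : poch (-(m:ℝ)) j = (-1)^j * (Nat.factorial m : ℝ) / (Nat.factorial (m-j) : ℝ) := by
    rw [eq_div_iff hmjne]
    linear_combination fneg
  have hCm : (m.choose j : ℝ)
      = (Nat.factorial m : ℝ) / ((Nat.factorial j : ℝ) * (Nat.factorial (m-j) : ℝ)) := by
    rw [eq_div_iff (by positivity)]
    linear_combination hCH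
  rw [hpm, hCm, hfacsplit]
  have h4p : (4:ℝ)^m = 2^(2*m) := by
    rw [show (4:ℝ) = 2^2 by norm_num, ← pow_mul]
  rw [h4p, pow_succ]
  have hmne : (Nat.factorial m : ℝ) ≠ 0 := by positivity
  have hjne : (Nat.factorial j : ℝ) ≠ 0 := by positivity
  have h2mne : (Nat.factorial (2*m-j-1) : ℝ) ≠ 0 := by positivity
  have hRne : R ≠ 0 := ne_of_gt hRpos
  have h2ne : ((2:ℝ)^(2*m)) ≠ 0 := by positivity
  field_simp
  ring

lemma stirlingShift (n : ℕ) (v : ℕ → ℝ) :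
    ∑ k ∈ Finset.range (n+2), stirling2 (n+1) k * v k
    = ∑ k ∈ Finset.range (n+1), stirling2 n k * (((k:ℝ)) * v k + v (k+1)) := by
  rw [Finset.sum_range_succ' (fun k => stirling2 (n+1) k * v k) (n+1)]
  simp only [stirling2_zero_right, zero_mul, add_zero]
  have expand : ∀ k ∈ Finset.range (n+1),
      stirling2 (n+1) (k+1) * v (k+1)
      = ((k:ℝ)+1) * stirling2 n (k+1) * v (k+1) + stirling2 n k * v (k+1) := by
    intro k _
    rw [stirling2_rec]
    push_cast
    ring
  rw [Finset.sum_congr rfl expand, Finset.sum_add_distrib]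
  have shift : ∑ k ∈ Finset.range (n+1), ((k:ℝ)+1) * stirling2 n (k+1) * v (k+1)
      = ∑ k ∈ Finset.range (n+1), (k:ℝ) * stirling2 n k * v k := by
    have h1 := Finset.sum_range_succ' (fun k => (k:ℝ) * stirling2 n k * v k) (n+1)
    have h2 := Finset.sum_range_succ (fun k => (k:ℝ) * stirling2 n k * v k) (n+1)
    simp only [Nat.cast_zero, zero_mul, add_zero,
      stirling2_eq_zero_of_lt n (n+1) (by omega), mul_zero, zero_mul] at h1 h2
    calc ∑ k ∈ Finset.range (n+1), ((k:ℝ)+1) * stirling2 n (k+1) * v (k+1)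
        = ∑ k ∈ Finset.range (n+1), (((k+1:ℕ):ℝ)) * stirling2 n (k+1) * v (k+1) := by
          refine Finset.sum_congr rfl fun k _ => ?_
          push_cast; ring
      _ = ∑ k ∈ Finset.range (n+2), (k:ℝ) * stirling2 n k * v k := h1.symm
      _ = ∑ k ∈ Finset.range (n+1), (k:ℝ) * stirling2 n k * v k := h2
  rw [shift, ← Finset.sum_add_distrib]
  refine Finset.sum_congr rfl fun k _ => ?_
  ring



lemma oddDF_eq_ODF (j : ℕ) : oddDF j = ODF (j+1) := rfl

lemma pPolyA (m n : ℕ) (h : n+1 ≤ 2*m) :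
    (Nat.factorial (2*m-n-1) : ℝ) * pPoly (n+1) (m:ℝ)
    = ∑ k ∈ Finset.range (n+2), stirling2 (n+1) k * wgt m k := by
  rw [pPoly, Finset.mul_sum]
  refine Finset.sum_congr rfl fun k hk => ?_
  simp only [Finset.mem_range] at hk
  have harg : 2 * (m:ℝ) - ((n+1:ℕ):ℝ) + 1 = ((2*m-n-1 : ℕ):ℝ) + 1 := by
    rw [show 2*m-n-1 = 2*m-(n+1) by omega, Nat.cast_sub h]
    push_cast; ring
  have hfac := poch_nat_fac (2*m-n-1) ((n+1)-k)
  rw [show 2*m-n-1 + ((n+1)-k) = 2*m-k by omega] at hfac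
  rw [harg]
  calc (Nat.factorial (2*m-n-1) : ℝ) *
        (stirling2 (n+1) k * poch (-(m:ℝ)) k * poch (1/2) k
          * poch (((2*m-n-1 : ℕ):ℝ) + 1) ((n+1) - k))
      = stirling2 (n+1) k * poch (-(m:ℝ)) k * poch (1/2) k *
          ((Nat.factorial (2*m-n-1) : ℝ) * poch (((2*m-n-1 : ℕ):ℝ) + 1) ((n+1) - k)) := by
        ring
    _ = stirling2 (n+1) k * wgt m k := by
        rw [hfac, wgt]; ring

lemma pPolyB (m n : ℕ) (h : n+1 ≤ 2*m) :
    (2*(m:ℝ) - (n:ℝ)) * (Nat.factorial (2*m-n-1) : ℝ) * pPoly n (m:ℝ)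
    = ∑ k ∈ Finset.range (n+1), stirling2 n k * wgt m k := by
  rw [pPoly, Finset.mul_sum]
  refine Finset.sum_congr rfl fun k hk => ?_
  simp only [Finset.mem_range] at hk
  have harg : 2 * (m:ℝ) - ((n:ℕ):ℝ) + 1 = ((2*m-n : ℕ):ℝ) + 1 := by
    rw [Nat.cast_sub (by omega : n ≤ 2*m)]
    push_cast; ring
  have hfold : (2*(m:ℝ) - (n:ℝ)) * (Nat.factorial (2*m-n-1) : ℝ)
      = (Nat.factorial (2*m-n) : ℝ) := by
    rw [show 2*m-n = (2*m-n-1)+1 by omega, Nat.factorial_succ]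
    have hc : ((2*m-n-1:ℕ):ℝ) = 2*(m:ℝ)-(n:ℝ)-1 := by
      rw [show 2*m-n-1 = 2*m-(n+1) by omega, Nat.cast_sub h]
      push_cast; ring
    push_cast [hc]
    ring
  have hfac := poch_nat_fac (2*m-n) (n-k)
  rw [show 2*m-n + (n-k) = 2*m-k by omega] at hfac
  rw [harg]
  calc (2*(m:ℝ) - (n:ℝ)) * (Nat.factorial (2*m-n-1) : ℝ) *
        (stirling2 n k * poch (-(m:ℝ)) k * poch (1/2) k
          * poch (((2*m-n : ℕ):ℝ) + 1) (n - k))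
      = stirling2 n k * poch (-(m:ℝ)) k * poch (1/2) k *
          (((2*(m:ℝ) - (n:ℝ)) * (Nat.factorial (2*m-n-1) : ℝ)) * poch (((2*m-n : ℕ):ℝ) + 1) (n - k)) := by
        ring
    _ = stirling2 n k * wgt m k := by
        rw [hfold, hfac, wgt]; ring

theorem stmt6 (m n : ℕ) (hmn : m ≥ n) (h2mn : 2 * m ≥ n + 1) :
    1 / (2 * 4 ^ m * (Nat.factorial m)) *
        ∑ k ∈ Finset.range (m + 1),
          (m.choose k : ℝ) * (4 * (k : ℝ) + 1) * (2 * (k : ℝ)) ^ n * (-1) ^ k /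
            poch ((k : ℝ) + 1 / 2) (m + 1) =
      2 ^ n * (Nat.factorial (2 * m - n - 1)) / ((Nat.factorial m : ℝ) ^ 2 * oddDF (2 * m)) *
        (4 * pPoly (n + 1) (m : ℝ) + (2 * (m : ℝ) - n) * pPoly n (m : ℝ)) := by
  have h1 : n + 1 ≤ 2*m := h2mn
  -- === RHS reduction ===
  have key : (Nat.factorial (2*m-n-1) : ℝ) *
      (4 * pPoly (n + 1) (m : ℝ) + (2 * (m : ℝ) - n) * pPoly n (m : ℝ))
      = ∑ j ∈ Finset.range (n+1),
          stirling2 n j * ((4*(j:ℝ)+1) * wgt m j + 4 * wgt m (j+1)) := by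
    have hA := pPolyA m n h1
    have hB := pPolyB m n h1
    have hshift := stirlingShift n (wgt m)
    calc (Nat.factorial (2*m-n-1) : ℝ) *
        (4 * pPoly (n + 1) (m : ℝ) + (2 * (m : ℝ) - n) * pPoly n (m : ℝ))
        = 4 * ((Nat.factorial (2*m-n-1) : ℝ) * pPoly (n+1) (m:ℝ))
          + (2*(m:ℝ) - (n:ℝ)) * (Nat.factorial (2*m-n-1) : ℝ) * pPoly n (m:ℝ) := by ring
      _ = 4 * ∑ k ∈ Finset.range (n+2), stirling2 (n+1) k * wgt m k
          + ∑ k ∈ Finset.range (n+1), stirling2 n k * wgt m k := by rw [hA, hB]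
      _ = 4 * ∑ k ∈ Finset.range (n+1), stirling2 n k * ((k:ℝ) * wgt m k + wgt m (k+1))
          + ∑ k ∈ Finset.range (n+1), stirling2 n k * wgt m k := by rw [hshift]
      _ = ∑ j ∈ Finset.range (n+1),
          stirling2 n j * ((4*(j:ℝ)+1) * wgt m j + 4 * wgt m (j+1)) := by
          rw [Finset.mul_sum, ← Finset.sum_add_distrib]
          refine Finset.sum_congr rfl fun j _ => ?_
          ring
  have hRHS : 2 ^ n * (Nat.factorial (2 * m - n - 1) : ℝ)
        / ((Nat.factorial m : ℝ) ^ 2 * oddDF (2 * m)) *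
        (4 * pPoly (n + 1) (m : ℝ) + (2 * (m : ℝ) - n) * pPoly n (m : ℝ))
      = ∑ j ∈ Finset.range (n+1), stirling2 n j *
          (2^n * ((1/((Nat.factorial m : ℝ)^2 * ODF (2*m+1))) *
            ((4*(j:ℝ)+1) * wgt m j + 4 * wgt m (j+1)))) := by
    rw [oddDF_eq_ODF]
    have hD : ((Nat.factorial m : ℝ)^2 * ODF (2*m+1)) ≠ 0 := by
      have := ODF_pos (2*m+1)
      positivity
    rw [div_mul_eq_mul_div, mul_comm ((2:ℝ)^n) _, mul_assoc]
    calc (Nat.factorial (2*m-n-1) : ℝ) *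
          ((2:ℝ)^n * (4 * pPoly (n + 1) (m : ℝ) + (2 * (m : ℝ) - n) * pPoly n (m : ℝ)))
          / ((Nat.factorial m : ℝ)^2 * ODF (2*m+1))
        = (2:ℝ)^n * ((Nat.factorial (2*m-n-1) : ℝ) *
            (4 * pPoly (n + 1) (m : ℝ) + (2 * (m : ℝ) - n) * pPoly n (m : ℝ)))
          / ((Nat.factorial m : ℝ)^2 * ODF (2*m+1)) := by ring
      _ = (2:ℝ)^n * (∑ j ∈ Finset.range (n+1),
            stirling2 n j * ((4*(j:ℝ)+1) * wgt m j + 4 * wgt m (j+1)))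
          / ((Nat.factorial m : ℝ)^2 * ODF (2*m+1)) := by rw [key]
      _ = ∑ j ∈ Finset.range (n+1), stirling2 n j *
          (2^n * ((1/((Nat.factorial m : ℝ)^2 * ODF (2*m+1))) *
            ((4*(j:ℝ)+1) * wgt m j + 4 * wgt m (j+1)))) := by
          rw [Finset.mul_sum, Finset.sum_div]
          refine Finset.sum_congr rfl fun j _ => ?_
          ring
  -- === LHS reduction ===
  set inner : ℕ → ℕ → ℝ := fun k j =>
    (m.choose k : ℝ) * (k.choose j : ℝ) * (4*(k:ℝ)+1) * (-1)^k / poch ((k:ℝ) + 1/2) (m+1)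
    with hinner
  have step1 : ∀ k ∈ Finset.range (m+1),
      (m.choose k : ℝ) * (4 * (k : ℝ) + 1) * (2 * (k : ℝ)) ^ n * (-1) ^ k /
        poch ((k : ℝ) + 1 / 2) (m + 1)
      = ∑ j ∈ Finset.range (n+1),
          stirling2 n j * ((Nat.factorial j : ℝ) * ((2:ℝ)^n * inner k j)) := by
    intro k _
    calc (m.choose k : ℝ) * (4 * (k : ℝ) + 1) * (2 * (k : ℝ)) ^ n * (-1) ^ k /
          poch ((k : ℝ) + 1 / 2) (m + 1)
        = ((k:ℝ)^n) * ((2:ℝ)^n * ((m.choose k : ℝ) * (4*(k:ℝ)+1) * (-1)^k /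
            poch ((k:ℝ) + 1/2) (m+1))) := by
          rw [mul_pow]; ring
      _ = (∑ j ∈ Finset.range (n+1), stirling2 n j * (Nat.factorial j : ℝ) * (k.choose j : ℝ))
            * ((2:ℝ)^n * ((m.choose k : ℝ) * (4*(k:ℝ)+1) * (-1)^k /
            poch ((k:ℝ) + 1/2) (m+1))) := by
          rw [← pow_eq_sum_stirling n k]
      _ = ∑ j ∈ Finset.range (n+1),
          stirling2 n j * ((Nat.factorial j : ℝ) * ((2:ℝ)^n * inner k j)) := by
          rw [Finset.sum_mul]
          refine Finset.sum_congr rfl fun j _ => ?_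
          simp only [hinner]
          ring
  rw [Finset.sum_congr rfl step1, Finset.sum_comm]
  have step2 : ∀ j ∈ Finset.range (n+1),
      ∑ k ∈ Finset.range (m+1),
        stirling2 n j * ((Nat.factorial j : ℝ) * ((2:ℝ)^n * inner k j))
      = stirling2 n j * ((Nat.factorial j : ℝ) * ((2:ℝ)^n *
          ((m.choose j : ℝ) * (-1)^j *
            ((4*(j:ℝ)+1) * (Nat.factorial (2*m-j) : ℝ)
                / ((Nat.factorial m : ℝ) * poch ((j:ℝ)+1/2) (2*m-j+1))
             - 4*((m:ℝ)-(j:ℝ)) * (Nat.factorial (2*m-j-1) : ℝ)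
                / ((Nat.factorial m : ℝ) * poch ((j:ℝ)+3/2) (2*m-j)))))) := by
    intro j hj
    simp only [Finset.mem_range] at hj
    have hjm : j ≤ m := by omega
    rw [← Finset.mul_sum, ← Finset.mul_sum, ← Finset.mul_sum]
    rw [show (∑ k ∈ Finset.range (m+1), inner k j)
      = ∑ k ∈ Finset.range (m+1),
        (m.choose k : ℝ) * (k.choose j : ℝ) * (4*(k:ℝ)+1) * (-1)^k
          / poch ((k:ℝ) + 1/2) (m+1) from rfl]
    rw [Usum m j hjm]
  rw [Finset.sum_congr rfl step2, hRHS, Finset.mul_sum]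
  refine Finset.sum_congr rfl fun j hj => ?_
  simp only [Finset.mem_range] at hj
  have hjm : j ≤ m := by omega
  have hj2 : j+1 ≤ 2*m := by omega
  have hperj := perj m j hjm hj2
  calc 1 / (2 * 4 ^ m * (Nat.factorial m : ℝ)) *
        (stirling2 n j * ((Nat.factorial j : ℝ) * ((2:ℝ)^n *
          ((m.choose j : ℝ) * (-1)^j *
            ((4*(j:ℝ)+1) * (Nat.factorial (2*m-j) : ℝ)
                / ((Nat.factorial m : ℝ) * poch ((j:ℝ)+1/2) (2*m-j+1))
             - 4*((m:ℝ)-(j:ℝ)) * (Nat.factorial (2*m-j-1) : ℝ)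
                / ((Nat.factorial m : ℝ) * poch ((j:ℝ)+3/2) (2*m-j)))))))
      = (stirling2 n j * (2:ℝ)^n) *
          ((1/(2*4^m*(Nat.factorial m : ℝ))) * ((Nat.factorial j : ℝ) *
            ((m.choose j : ℝ) * (-1)^j *
              ((4*(j:ℝ)+1) * (Nat.factorial (2*m-j) : ℝ)
                  / ((Nat.factorial m : ℝ) * poch ((j:ℝ)+1/2) (2*m-j+1))
               - 4*((m:ℝ)-(j:ℝ)) * (Nat.factorial (2*m-j-1) : ℝ)
                  / ((Nat.factorial m : ℝ) * poch ((j:ℝ)+3/2) (2*m-j)))))) := by ring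
    _ = (stirling2 n j * (2:ℝ)^n) *
          ((1/((Nat.factorial m : ℝ)^2 * ODF (2*m+1))) *
            ((4*(j:ℝ)+1) * wgt m j + 4 * wgt m (j+1))) := by rw [hperj]
    _ = stirling2 n j *
          (2^n * ((1/((Nat.factorial m : ℝ)^2 * ODF (2*m+1))) *
            ((4*(j:ℝ)+1) * wgt m j + 4 * wgt m (j+1)))) := by ring
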